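/- arXiv:2205.01959 — 4 statements merged into one kernel-verified Lean document; each statement's English description precedes it below -/
import Mathlib

section
/- Let H be a complex Hilbert space. Then H is finite-dimensional over ℂ if and only if the lattice of closed subspaces of H is modular, i.e., for all closed subspaces X, Y, Z of H with X ≤ Y one has closure(X + (Z ⊓ Y)) = closure(X + Z) ⊓ Y, where + is the sum of submodules and closure denotes topological closure (Theorem 1(2)). -/
noncomputable section AuxModular

variable {H : Type*} [NormedAddCommGroup H] [InnerProductSpace ℂ H] [CompleteSpace H]

local notation "⟪" x ", " y "⟫" => @inner ℂ _ _ x y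

private lemma aux_hasSum {ι : Type*} {v : ι → H} (hv : Orthonormal ℂ v)
    (x : lp (fun _ : ι => ℂ) 2) (w : H) :
    HasSum (fun i => x i * ⟪w, v i⟫) ⟪w, hv.orthogonalFamily.linearIsometry x⟫ := by
  have h := (hv.orthogonalFamily.hasSum_linearIsometry x).mapL (innerSL ℂ w)
  simpa [LinearIsometry.toSpanSingleton_apply, inner_smul_right] using h

private lemma aux_inner {ι : Type*} [DecidableEq ι] {v : ι → H} (hv : Orthonormal ℂ v)
    (x : lp (fun _ : ι => ℂ) 2) (j : ι) :
    ⟪v j, hv.orthogonalFamily.linearIsometry x⟫ = x j := by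
  have h := aux_hasSum hv x (v j)
  have h2 : HasSum (fun i => if i = j then x j else 0)
      ⟪v j, hv.orthogonalFamily.linearIsometry x⟫ := by
    convert h using 2 with i
    rcases eq_or_ne i j with rfl | hij
    · simp [orthonormal_iff_ite.mp hv, hv.1 i]
    · simp [orthonormal_iff_ite.mp hv, hij, Ne.symm hij]
  simpa using h2.unique (hasSum_ite_eq j (x j))

private lemma aux_mem {ι : Type*} {v : ι → H} (hv : Orthonormal ℂ v) (z : H) :
    z ∈ (Submodule.span ℂ (Set.range v)).topologicalClosure ↔
      ∃ x : lp (fun _ : ι => ℂ) 2, hv.orthogonalFamily.linearIsometry x = z := by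
  have h := hv.orthogonalFamily.range_linearIsometry
  have hr : (⨆ i, LinearMap.range (LinearIsometry.toSpanSingleton ℂ H (hv.1 i)).toLinearMap)
      = Submodule.span ℂ (Set.range v) := by
    rw [Submodule.span_range_eq_iSup]
    congr 1
    ext i
    rw [LinearIsometry.coe_toSpanSingleton, ← LinearMap.span_singleton_eq_range]
  rw [hr] at h
  rw [← h]
  exact ⟨fun ⟨x, hx⟩ => ⟨x, hx⟩, fun ⟨x, hx⟩ => ⟨x, hx⟩⟩

private lemma aux_closed_sup {A : Submodule ℂ H} (hA : IsClosed (A : Set H)) {v : H}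
    (hperp : ∀ a ∈ A, ⟪v, a⟫ = 0) (hv0 : v ≠ 0) :
    IsClosed ((A ⊔ Submodule.span ℂ {v} : Submodule ℂ H) : Set H) := by
  apply IsSeqClosed.isClosed
  intro x p hx hp
  have hmem : ∀ n, ∃ a ∈ A, ∃ t : ℂ, x n = a + t • v := by
    intro n
    obtain ⟨a, ha, b, hb, hab⟩ := Submodule.mem_sup.mp (hx n)
    obtain ⟨t, rfl⟩ := Submodule.mem_span_singleton.mp hb
    exact ⟨a, ha, t, hab.symm⟩
  choose a ha t hxn using hmem
  have hvv : ⟪v, v⟫ ≠ 0 := inner_self_ne_zero.mpr hv0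
  have ht : ∀ n, ⟪v, x n⟫ = t n * ⟪v, v⟫ := by
    intro n
    rw [hxn n, inner_add_right, inner_smul_right, hperp _ (ha n), zero_add]
  have htend : Filter.Tendsto (fun n => ⟪v, x n⟫) Filter.atTop (nhds ⟪v, p⟫) :=
    (Filter.Tendsto.inner tendsto_const_nhds hp)
  set T : ℂ := ⟪v, p⟫ / ⟪v, v⟫ with hT
  have httend : Filter.Tendsto t Filter.atTop (nhds T) := by
    have heq : (fun n => ⟪v, x n⟫ / ⟪v, v⟫) = fun n => t n := by
      funext n; rw [ht n, mul_div_cancel_right₀ _ hvv]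
    rw [show t = fun n => ⟪v, x n⟫ / ⟪v, v⟫ from heq.symm]
    exact htend.div_const _
  have hat : Filter.Tendsto (fun n => x n - t n • v) Filter.atTop (nhds (p - T • v)) :=
    hp.sub (httend.smul_const v)
  have hpa : p - T • v ∈ A := by
    refine hA.mem_of_tendsto hat (Filter.Eventually.of_forall fun n => ?_)
    rw [hxn n]; simpa using ha n
  have heq : p = (p - T • v) + T • v := by abel
  rw [heq]
  exact Submodule.add_mem_sup hpa (Submodule.mem_span_singleton.mpr ⟨T, rfl⟩)

end AuxModular

/-- A complex Hilbert space is finite-dimensional iff the lattice of its closed subspaces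
is modular: for all closed subspaces `X ≤ Y` and `Z`,
`closure (X + (Z ⊓ Y)) = closure (X + Z) ⊓ Y`. -/
theorem finiteDimensional_iff_modular {H : Type*} [NormedAddCommGroup H]
    [InnerProductSpace ℂ H] [CompleteSpace H] :
    FiniteDimensional ℂ H ↔
      ∀ X Y Z : Submodule ℂ H, IsClosed (X : Set H) → IsClosed (Y : Set H) →
        IsClosed (Z : Set H) → X ≤ Y →
          (X + Z ⊓ Y).topologicalClosure = (X + Z).topologicalClosure ⊓ Y := by
  constructor
  · intro hfd X Y Z _ _ _ hXY
    have hcl : ∀ W : Submodule ℂ H, W.topologicalClosure = W := fun W =>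
      (W.closed_of_finiteDimensional).submodule_topologicalClosure_eq
    rw [hcl, hcl, Submodule.add_eq_sup, Submodule.add_eq_sup]
    exact (sup_inf_assoc_of_le Z hXY).symm
  · intro hmod
    by_contra hinf
    obtain ⟨w, b, hbw⟩ := exists_hilbertBasis ℂ H
    have hwinf : Infinite w := by
      rw [Set.infinite_coe_iff]
      intro hwfin
      apply hinf
      have hfd : FiniteDimensional ℂ (Submodule.span ℂ w : Submodule ℂ H) :=
        FiniteDimensional.span_of_finite ℂ hwfin
      have h3 : Submodule.span ℂ w = ⊤ := by
        have h4 := b.dense_span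
        rw [hbw, Subtype.range_coe] at h4
        rwa [(Submodule.span ℂ w).closed_of_finiteDimensional.submodule_topologicalClosure_eq]
          at h4
      rw [h3] at hfd
      exact Submodule.topEquiv.finiteDimensional
    let emb : (ℕ ⊕ ℕ) ↪ w := Equiv.natSumNatEquivNat.toEmbedding.trans (Infinite.natEmbedding w)
    set u : ℕ ⊕ ℕ → H := fun i => b (emb i) with hu_def
    have hu : Orthonormal ℂ u := b.orthonormal.comp emb emb.injective
    set e : ℕ → H := fun n => u (Sum.inl n) with he_def
    set f : ℕ → H := fun n => u (Sum.inr n) with hf_def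
    have he : Orthonormal ℂ e := hu.comp Sum.inl Sum.inl_injective
    have hf : Orthonormal ℂ f := hu.comp Sum.inr Sum.inr_injective
    have hou := orthonormal_iff_ite.mp hu
    have hee : ∀ m n, @inner ℂ _ _ (e m) (e n) = if m = n then 1 else 0 := fun m n => by
      simpa [Sum.inl.injEq] using hou (Sum.inl m) (Sum.inl n)
    have hef : ∀ m n, @inner ℂ _ _ (e m) (f n) = 0 := fun m n => by
      simpa using hou (Sum.inl m) (Sum.inr n)
    have hfe : ∀ m n, @inner ℂ _ _ (f m) (e n) = 0 := fun m n => by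
      simpa using hou (Sum.inr m) (Sum.inl n)
    have hff : ∀ m n, @inner ℂ _ _ (f m) (f n) = if m = n then 1 else 0 := fun m n => by
      simpa [Sum.inr.injEq] using hou (Sum.inr m) (Sum.inr n)
    set sr : ℕ → ℝ := fun n => (2 : ℝ)⁻¹ ^ n with hsr_def
    have hsr_pos : ∀ n, 0 < sr n := fun n => pow_pos (by norm_num) n
    have hsr_ne : ∀ n, (sr n : ℂ) ≠ 0 := fun n => by
      exact_mod_cast Complex.ofReal_ne_zero.mpr (hsr_pos n).ne'
    have hsr_le : ∀ n, sr n ≤ 1 := fun n => pow_le_one₀ (by norm_num) (by norm_num)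
    set cr : ℕ → ℝ := fun n => Real.sqrt (1 - sr n ^ 2) with hcr_def
    have hcs : ∀ n, cr n ^ 2 + sr n ^ 2 = 1 := fun n => by
      have h1 : 0 ≤ 1 - sr n ^ 2 := by nlinarith [hsr_pos n, hsr_le n]
      have := Real.sq_sqrt h1
      simp only [hcr_def]
      rw [this]; ring
    set g : ℕ → H := fun n => (cr n : ℂ) • e n + (sr n : ℂ) • f n with hg_def
    have hg : Orthonormal ℂ g := by
      rw [orthonormal_iff_ite]
      intro m n
      simp only [hg_def, inner_add_left, inner_add_right, inner_smul_left, inner_smul_right,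
        hee, hef, hfe, hff, Complex.conj_ofReal, mul_zero, add_zero, zero_add, mul_ite, mul_one]
      rcases eq_or_ne m n with rfl | hmn
      · norm_num
        have hr : cr m * cr m + sr m * sr m = 1 := by nlinarith [hcs m]
        exact_mod_cast hr
      · simp [hmn]
    set A := (Submodule.span ℂ (Set.range e)).topologicalClosure with hA_def
    set B := (Submodule.span ℂ (Set.range g)).topologicalClosure with hB_def
    have hAclosed : IsClosed ((A : Submodule ℂ H) : Set H) := by
      rw [hA_def]; exact Submodule.isClosed_topologicalClosure _
    have hBclosed : IsClosed ((B : Submodule ℂ H) : Set H) := by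
      rw [hB_def]; exact Submodule.isClosed_topologicalClosure _
    -- the special vector v₀
    have hs_mem : Memℓp (fun n : ℕ => ((sr n : ℂ))) (2 : ENNReal) := by
      apply memℓp_gen
      have heq : (fun n : ℕ => ‖((sr n : ℂ))‖ ^ (2 : ENNReal).toReal) = fun n => ((4 : ℝ)⁻¹) ^ n := by
        funext n
        have h1 : ‖((sr n : ℂ))‖ = sr n := by
          rw [Complex.norm_real, Real.norm_eq_abs, abs_of_pos (hsr_pos n)]
        rw [h1]
        have h2 : (2 : ENNReal).toReal = ((2 : ℕ) : ℝ) := by norm_num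
        rw [h2, Real.rpow_natCast, hsr_def]
        norm_num
        rw [← pow_mul, mul_comm, pow_mul]
        norm_num
      rw [heq]
      exact summable_geometric_of_lt_one (by norm_num) (by norm_num)
    set sl : lp (fun _ : ℕ => ℂ) 2 := ⟨fun n => (sr n : ℂ), hs_mem⟩ with hsl_def
    set v₀ : H := hf.orthogonalFamily.linearIsometry sl with hv₀_def
    have hslm : ∀ m, (sl : ∀ _ : ℕ, ℂ) m = (sr m : ℂ) := fun m => rfl
    have hfv₀ : ∀ m, @inner ℂ _ _ (f m) v₀ = (sr m : ℂ) := fun m => by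
      rw [hv₀_def, aux_inner hf sl m, hslm]
    have hv₀_ne : v₀ ≠ 0 := by
      intro h0
      have h1 := hfv₀ 0
      rw [h0, inner_zero_right] at h1
      have : sr 0 = 1 := by simp [hsr_def]
      rw [this] at h1
      exact one_ne_zero h1.symm
    -- inner products with elements of A and B
    have hfA : ∀ m, ∀ a ∈ A, @inner ℂ _ _ (f m) a = 0 := by
      intro m a ha
      obtain ⟨x, rfl⟩ := (aux_mem he a).mp ha
      have h := aux_hasSum he x (f m)
      have h0 : HasSum (fun _ : ℕ => (0 : ℂ))
          (@inner ℂ _ _ (f m) (he.orthogonalFamily.linearIsometry x)) := by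
        simpa [hfe] using h
      simpa using h0.unique hasSum_zero
    have hfg : ∀ m i, @inner ℂ _ _ (f m) (g i) = if i = m then ((sr m : ℂ)) else 0 := by
      intro m i
      rw [hg_def]
      simp only [inner_add_right, inner_smul_right, hfe, hff, mul_zero, zero_add]
      rcases eq_or_ne i m with rfl | him
      · simp
      · simp [him, Ne.symm him]
    have hfB : ∀ m (y : lp (fun _ : ℕ => ℂ) 2),
        @inner ℂ _ _ (f m) (hg.orthogonalFamily.linearIsometry y) = y m * sr m := by
      intro m y
      have h := aux_hasSum hg y (f m)
      have h2 : HasSum (fun i => if i = m then ((y m : ℂ) * sr m) else 0)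
          (@inner ℂ _ _ (f m) (hg.orthogonalFamily.linearIsometry y)) := by
        convert h using 1
        funext i
        rw [hfg m i]
        rcases eq_or_ne i m with rfl | him
        · simp
        · simp [him]
      exact h2.unique (hasSum_ite_eq m _)
    -- A ⊓ B = ⊥
    have hAB : A ⊓ B = ⊥ := by
      rw [eq_bot_iff]
      rintro z hz
      obtain ⟨hzA, hzB⟩ := Submodule.mem_inf.mp hz
      obtain ⟨y, rfl⟩ := (aux_mem hg z).mp hzB
      have hy : ∀ m, (y : ∀ _ : ℕ, ℂ) m = 0 := by
        intro m
        have h1 := hfB m y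
        rw [hfA m _ hzA] at h1
        have := h1.symm
        rcases mul_eq_zero.mp this with h | h
        · exact h
        · exact absurd h (hsr_ne m)
      have hy0 : y = 0 := by
        apply Subtype.ext
        funext m
        exact hy m
      rw [hy0]
      simp
    -- v₀ ∉ A ⊔ B
    have hv₀AB : v₀ ∉ A ⊔ B := by
      intro hmem
      obtain ⟨a, haA, bb, hbB, habv⟩ := Submodule.mem_sup.mp hmem
      obtain ⟨x, rfl⟩ := (aux_mem he a).mp haA
      obtain ⟨y, rfl⟩ := (aux_mem hg bb).mp hbB
      have hy1 : ∀ m, (y : ∀ _ : ℕ, ℂ) m = 1 := by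
        intro m
        have h1 : @inner ℂ _ _ (f m) v₀ = (y m : ℂ) * sr m := by
          rw [← habv, inner_add_right, hfA m _ ((aux_mem he _).mpr ⟨x, rfl⟩), zero_add, hfB]
        rw [hfv₀ m] at h1
        have := h1
        field_simp [hsr_ne m] at this
        exact this.symm
      have hsum := Memℓp.summable (by norm_num : 0 < (2 : ENNReal).toReal) (lp.memℓp y)
      have heq1 : (fun i : ℕ => ‖(y : ∀ _ : ℕ, ℂ) i‖ ^ (2 : ENNReal).toReal) = fun _ => (1 : ℝ) := by
        funext i
        rw [hy1 i]
        simp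
      rw [heq1] at hsum
      exact one_ne_zero ((summable_const_iff (1 : ℝ)).mp hsum)
    -- v₀ ∈ closure (A ⊔ B)
    have hv₀cl : v₀ ∈ (A ⊔ B).topologicalClosure := by
      have hfmem : ∀ m, f m ∈ A ⊔ B := by
        intro m
        have hgm : g m ∈ B :=
          Submodule.le_topologicalClosure _ (Submodule.subset_span ⟨m, rfl⟩)
        have hem : e m ∈ A :=
          Submodule.le_topologicalClosure _ (Submodule.subset_span ⟨m, rfl⟩)
        have hfm : f m = ((sr m : ℂ))⁻¹ • (g m - (cr m : ℂ) • e m) := by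
          rw [hg_def]
          simp only [add_sub_cancel_left]
          rw [smul_smul, inv_mul_cancel₀ (hsr_ne m), one_smul]
        rw [hfm]
        exact Submodule.smul_mem _ _ (Submodule.sub_mem _ (Submodule.mem_sup_right hgm)
          (Submodule.smul_mem _ _ (Submodule.mem_sup_left hem)))
      have hspan : Submodule.span ℂ (Set.range f) ≤ A ⊔ B :=
        Submodule.span_le.mpr (by rintro _ ⟨m, rfl⟩; exact hfmem m)
      have h1 : v₀ ∈ (Submodule.span ℂ (Set.range f)).topologicalClosure :=
        (aux_mem hf v₀).mpr ⟨sl, rfl⟩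
      exact Submodule.topologicalClosure_mono hspan h1
    -- v₀ ⊥ A
    have hvA_perp : ∀ a ∈ A, @inner ℂ _ _ v₀ a = 0 := by
      intro a ha
      obtain ⟨x, rfl⟩ := (aux_mem he a).mp ha
      have hve : ∀ i, @inner ℂ _ _ v₀ (e i) = 0 := by
        intro i
        rw [← inner_conj_symm]
        have h2 := aux_hasSum hf sl (e i)
        have h3 : @inner ℂ _ _ (e i) v₀ = 0 := by
          have h4 : HasSum (fun _ : ℕ => (0 : ℂ)) (@inner ℂ _ _ (e i) v₀) := by
            simpa [hef] using h2
          simpa using h4.unique hasSum_zero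
        rw [h3, map_zero]
      have h := aux_hasSum he x v₀
      have h0 : HasSum (fun _ : ℕ => (0 : ℂ))
          (@inner ℂ _ _ v₀ (he.orthogonalFamily.linearIsometry x)) := by
        simpa [hve] using h
      simpa using h0.unique hasSum_zero
    -- set up the modularity contradiction
    set Y := A ⊔ Submodule.span ℂ {v₀} with hY_def
    have hYclosed : IsClosed (Y : Set H) :=
      aux_closed_sup hAclosed hvA_perp hv₀_ne
    have hmodeq := hmod A Y B hAclosed hYclosed hBclosed le_sup_left
    have hBY : B ⊓ Y = ⊥ := by
      rw [eq_bot_iff]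
      rintro z hz
      obtain ⟨hzB, hzY⟩ := Submodule.mem_inf.mp hz
      obtain ⟨a, haA, bb, hbb, habz⟩ := Submodule.mem_sup.mp hzY
      obtain ⟨t, rfl⟩ := Submodule.mem_span_singleton.mp hbb
      have ht0 : t = 0 := by
        by_contra ht
        apply hv₀AB
        have hv₀eq : v₀ = t⁻¹ • ((a + t • v₀) - a) := by
          rw [add_sub_cancel_left, smul_smul, inv_mul_cancel₀ ht, one_smul]
        rw [hv₀eq]
        refine Submodule.smul_mem _ _ (Submodule.sub_mem _ ?_ (Submodule.mem_sup_left haA))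
        rw [habz]
        exact Submodule.mem_sup_right hzB
      rw [ht0, zero_smul, add_zero] at habz
      have : z ∈ A ⊓ B := Submodule.mem_inf.mpr ⟨habz ▸ haA, hzB⟩
      rw [hAB] at this
      exact this
    rw [hBY] at hmodeq
    rw [Submodule.add_eq_sup, sup_bot_eq,
      hAclosed.submodule_topologicalClosure_eq] at hmodeq
    have hv₀mem : v₀ ∈ (A + B).topologicalClosure ⊓ Y := by
      refine Submodule.mem_inf.mpr ⟨?_, Submodule.mem_sup_right (Submodule.mem_span_singleton_self v₀)⟩
      rw [Submodule.add_eq_sup]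
      exact hv₀cl
    rw [← hmodeq] at hv₀mem
    exact hv₀AB (Submodule.mem_sup_left hv₀mem)
end

section
/- Let H be a complex Hilbert space and let X, Y be closed subspaces of H. Then X ⊓ closure(Xᗮ + (X ⊓ Y)) ≤ Y, i.e., X ⊓ (X → Y) ≤ Y for the Sasaki implication. (This is the soundness, in the lattice of closed subspaces of a Hilbert space, of the quantum-logic modus ponens axiom QL11: β ∧ ¬(β ∧ ¬(β ∧ γ)) ⊢ γ.) -/
/-- Soundness of the quantum-logic modus ponens (axiom QL11) in the lattice of closed
subspaces of a complex Hilbert space: `X ⊓ (X → Y) ≤ Y` for the Sasaki implication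
`X → Y := closure (Xᗮ + (X ⊓ Y))`. -/
theorem inf_sasaki_implication_le {H : Type*} [NormedAddCommGroup H]
    [InnerProductSpace ℂ H] [CompleteSpace H] (X Y : Submodule ℂ H)
    (hX : IsClosed (X : Set H)) (hY : IsClosed (Y : Set H)) :
    X ⊓ (Xᗮ + X ⊓ Y).topologicalClosure ≤ Y := by
  haveI : CompleteSpace X := hX.completeSpace_coe
  set Z : Submodule ℂ H := X ⊓ Y with hZ
  have hZclosed : IsClosed (Z : Set H) := hX.inter hY
  -- the continuous map: orthogonal projection onto X, viewed into H
  set f : H →L[ℂ] H := X.subtypeL.comp X.orthogonalProjectionOnto with hf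
  have hfmem : ∀ w ∈ Xᗮ + Z, f w ∈ Z := by
    intro w hw
    rw [Submodule.add_eq_sup, Submodule.mem_sup] at hw
    obtain ⟨a, ha, b, hb, rfl⟩ := hw
    have hb' : b ∈ X := hb.1
    have : f (a + b) = b := by
      simp only [hf, ContinuousLinearMap.comp_apply, map_add, Submodule.subtypeL_apply]
      rw [Submodule.orthogonalProjectionOnto_apply_of_mem_orthogonal ha,
        Submodule.orthogonalProjectionOnto_mem_subspace_eq_self (K := X) ⟨b, hb'⟩]
      simp
    rw [this]; exact hb
  have hclos : ∀ w ∈ (Xᗮ + Z).topologicalClosure, f w ∈ Z := by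
    intro w hw
    have hpre : IsClosed (f ⁻¹' (Z : Set H)) := hZclosed.preimage f.continuous
    have : ((Xᗮ + Z : Submodule ℂ H) : Set H) ⊆ f ⁻¹' (Z : Set H) := fun u hu => hfmem u hu
    have hsub : closure ((Xᗮ + Z : Submodule ℂ H) : Set H) ⊆ f ⁻¹' (Z : Set H) :=
      closure_minimal this hpre
    exact hsub hw
  rintro x ⟨hxX, hxC⟩
  have hfx : f x = x := by
    simp only [hf, ContinuousLinearMap.comp_apply, Submodule.subtypeL_apply]
    rw [Submodule.orthogonalProjectionOnto_mem_subspace_eq_self (K := X) ⟨x, hxX⟩]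
  have := hclos x hxC
  rw [hfx] at this
  exact this.2
end

section
/- Let H be a complex Hilbert space, let E : H →L[ℂ] H be a continuous linear operator, let ρ : H →L[ℂ] H be a positive operator, and let X be a closed subspace of H. Then supp(E ∘ ρ ∘ E†) ≤ X if and only if supp ρ ≤ (E†(Xᗮ))ᗮ, where E†(Xᗮ) denotes the image of Xᗮ under the adjoint E† (Schrödinger–Heisenberg duality, Lemma 2, for a quantum operation given by a single Kraus operator E). -/
open ContinuousLinearMap


lemma pos_apply_eq_zero {H : Type*} [NormedAddCommGroup H]
    [InnerProductSpace ℂ H] [CompleteSpace H] (ρ : H →L[ℂ] H)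
    (hρ : ρ.IsPositive) {x : H} (h : inner ℂ x (ρ x) = 0) : ρ x = 0 := by
  have hsa : IsSelfAdjoint ρ := hρ.isSelfAdjoint
  have hcs := InnerProductSpace.Core.inner_mul_inner_self_le (𝕜 := ℂ) (F := H)
    (c := { inner := fun a b => inner ℂ a (ρ b)
            conj_inner_symm := fun a b => by
              rw [← ContinuousLinearMap.adjoint_inner_left, hsa.adjoint_eq, ← inner_conj_symm]
              simp
            re_inner_nonneg := fun a => (RCLike.nonneg_iff.mp (hρ.inner_nonneg_right a)).1
            add_left := fun a b z => by simp [inner_add_left]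
            smul_left := fun a b r => by simp [inner_smul_left, mul_comm] }) (ρ x) x
  have hcs' : ‖inner ℂ (ρ x) (ρ x)‖ * ‖inner ℂ x (ρ (ρ x))‖ ≤
      RCLike.re (inner ℂ (ρ x) (ρ (ρ x))) * RCLike.re (inner ℂ x (ρ x)) := hcs
  rw [h] at hcs'
  have h2 : inner ℂ x (ρ (ρ x)) = inner ℂ (ρ x) (ρ x) := by
    rw [← ContinuousLinearMap.adjoint_inner_left, hsa.adjoint_eq]
  rw [h2] at hcs'
  simp only [map_zero, mul_zero, inner_self_eq_norm_sq_to_K] at hcs'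
  have h3 : ‖ρ x‖ = 0 := by
    by_contra hne
    have hpos : (0:ℝ) < ‖ρ x‖ := lt_of_le_of_ne (norm_nonneg _) (Ne.symm hne)
    simp only [norm_pow, RCLike.norm_ofReal, Complex.norm_real, Real.norm_eq_abs, abs_norm] at hcs'
    nlinarith [mul_pos (pow_pos hpos 2) (pow_pos hpos 2)]
  exact norm_eq_zero.mp h3

/-- Schrödinger–Heisenberg duality (Lemma 2) for a quantum operation with a single Kraus
operator `E`: for a positive operator `ρ` and a closed subspace `X`,
`supp (E ρ E†) ≤ X ↔ supp ρ ≤ (E† Xᗮ)ᗮ`, where `supp σ = (ker σ)ᗮ`. -/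
theorem schroedinger_heisenberg_duality {H : Type*} [NormedAddCommGroup H]
    [InnerProductSpace ℂ H] [CompleteSpace H] (E ρ : H →L[ℂ] H)
    (hρ : ρ.IsPositive) (X : Submodule ℂ H) (hX : IsClosed (X : Set H)) :
    (LinearMap.ker ((E ∘L ρ ∘L adjoint E : H →L[ℂ] H) : H →ₗ[ℂ] H))ᗮ ≤ X ↔
      (LinearMap.ker (ρ : H →ₗ[ℂ] H))ᗮ ≤ (Xᗮ.map (adjoint E : H →ₗ[ℂ] H))ᗮ := by
  haveI : CompleteSpace X := hX.completeSpace_coe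
  haveI : CompleteSpace (LinearMap.ker ((E ∘L ρ ∘L adjoint E : H →L[ℂ] H) : H →ₗ[ℂ] H)) :=
    (ContinuousLinearMap.isClosed_ker (E ∘L ρ ∘L adjoint E)).completeSpace_coe
  haveI : CompleteSpace (LinearMap.ker (ρ : H →ₗ[ℂ] H)) :=
    (ContinuousLinearMap.isClosed_ker ρ).completeSpace_coe
  have hmid : Xᗮ ≤ LinearMap.ker ((E ∘L ρ ∘L adjoint E : H →L[ℂ] H) : H →ₗ[ℂ] H) ↔ Xᗮ.map (adjoint E : H →ₗ[ℂ] H) ≤ LinearMap.ker (ρ : H →ₗ[ℂ] H) := by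
    rw [Submodule.map_le_iff_le_comap]
    constructor
    · intro hl x hx
      have h0 : E (ρ (adjoint E x)) = 0 := hl hx
      have hinner : inner ℂ (adjoint E x) (ρ (adjoint E x)) = 0 := by
        rw [ContinuousLinearMap.adjoint_inner_left, h0, inner_zero_right]
      simpa using pos_apply_eq_zero ρ hρ hinner
    · intro hr x hx
      have h0 : ρ (adjoint E x) = 0 := hr hx
      simp [ContinuousLinearMap.comp_apply, h0, LinearMap.mem_ker]
  constructor
  · intro hl
    have h1 : Xᗮ ≤ LinearMap.ker ((E ∘L ρ ∘L adjoint E : H →L[ℂ] H) : H →ₗ[ℂ] H) := by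
      intro x hx
      have := Submodule.orthogonal_le hl hx
      rwa [Submodule.orthogonal_orthogonal] at this
    exact Submodule.orthogonal_le (hmid.mp h1)
  · intro hr
    have h2 : Xᗮ.map (adjoint E : H →ₗ[ℂ] H) ≤ LinearMap.ker (ρ : H →ₗ[ℂ] H) :=
      le_trans (Submodule.le_orthogonal_orthogonal _)
        (le_trans (Submodule.orthogonal_le hr)
          (le_of_eq (Submodule.orthogonal_orthogonal _)))
    have h1 := hmid.mpr h2
    intro x hx
    have := Submodule.orthogonal_le h1 hx
    rwa [Submodule.orthogonal_orthogonal] at this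
end

section
/- Let H be a complex Hilbert space, let A : H →L[ℂ] H be a positive operator, and let E : H →L[ℂ] H be any continuous linear operator. Then closure(range(E ∘ A ∘ E†)) = closure(E(range A)), where E(range A) is the image of the range of A under E. (This computes the support of the state E ρ E† obtained by applying a Kraus operator E, and underlies the image operation E(X) = ⋁_{ψ∈X} supp(E(|ψ⟩⟨ψ|)) of equation (10).) -/
open ContinuousLinearMap
open scoped InnerProductSpace

set_option synthInstance.maxHeartbeats 1000000 in
/-- For a positive operator `A`, if `⟪A z, z⟫ = 0` then `A z = 0`. -/
lemma isPositive_apply_eq_zero_of_inner {H : Type*} [NormedAddCommGroup H]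
    [InnerProductSpace ℂ H] [CompleteSpace H] {A : H →L[ℂ] H} (hA : A.IsPositive)
    {z : H} (hz : ⟪A z, z⟫_ℂ = 0) : A z = 0 := by
  have hA' : (0 : H →L[ℂ] H) ≤ A := (nonneg_iff_isPositive A).mpr hA
  set B := CFC.sqrt A with hBdef
  have hBB : B * B = A := CFC.sqrt_mul_sqrt_self A hA'
  have hBsa : IsSelfAdjoint B := IsSelfAdjoint.of_nonneg (CFC.sqrt_nonneg A)
  have hadj : ContinuousLinearMap.adjoint B = B := hBsa
  have hBz : B z = 0 := by
    have h1 : ⟪B z, B z⟫_ℂ = ⟪A z, z⟫_ℂ := by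
      rw [← hBB, ContinuousLinearMap.mul_apply]
      rw [← adjoint_inner_left B, hadj]
    rw [hz] at h1
    exact inner_self_eq_zero.mp h1
  rw [← hBB, ContinuousLinearMap.mul_apply, hBz, map_zero]

/-- The support of the state obtained by applying a single Kraus operator `E` to a positive
operator `A`: `closure (range (E A E†)) = closure (E (range A))`. -/
theorem closure_range_kraus_conj {H : Type*} [NormedAddCommGroup H]
    [InnerProductSpace ℂ H] [CompleteSpace H] (A E : H →L[ℂ] H) (hA : A.IsPositive) :
    (LinearMap.range ((E ∘L A ∘L adjoint E : H →L[ℂ] H) : H →ₗ[ℂ] H)).topologicalClosure =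
      ((LinearMap.range (A : H →ₗ[ℂ] H)).map (E : H →ₗ[ℂ] H)).topologicalClosure := by
  have hAsa : ContinuousLinearMap.adjoint A = A := hA.isSelfAdjoint
  refine le_antisymm ?_ ?_
  · apply Submodule.topologicalClosure_mono
    rintro _ ⟨x, rfl⟩
    exact ⟨A (ContinuousLinearMap.adjoint E x), ⟨_, rfl⟩, rfl⟩
  · refine Submodule.topologicalClosure_minimal _ ?_
      (Submodule.isClosed_topologicalClosure _)
    rw [← Submodule.orthogonal_orthogonal_eq_closure]
    intro w hw
    rw [Submodule.mem_orthogonal']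
    intro y hy
    rw [Submodule.mem_orthogonal] at hy
    -- key: A (E† y) = 0
    have hz : A (ContinuousLinearMap.adjoint E y) = 0 := by
      apply isPositive_apply_eq_zero_of_inner hA
      have := hy _ ⟨y, rfl⟩
      simp only [ContinuousLinearMap.coe_coe, comp_apply] at this
      rw [adjoint_inner_right]
      exact this
    obtain ⟨_, ⟨x, rfl⟩, rfl⟩ := hw
    simp only [ContinuousLinearMap.coe_coe]
    rw [← adjoint_inner_right E, ← hAsa, adjoint_inner_left, hz, inner_zero_right]
end
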